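/- In the GRW specialization of the pointwise model with g(P,P) = −1, ω = 1, and Ric(P,X) = (n−1)·π(X) for all X ∈ V: the Einstein type condition of the fourth kind Ric⁴ = (r⁴/n)·g holds if and only if Ric = (n−1)·(2g + π⊗π); and in that case the scalar curvature is the constant r = (n−1)(2n−1). -/

import Mathlib

/-- The `g`-trace of a bilinear form `B`: the trace of the endomorphism
`(g♭)⁻¹ ∘ B♭` of `V`, where `B♭ : V → V*` is `X ↦ B(X,·)`. -/
noncomputable def trG {V : Type*} [AddCommGroup V] [Module ℝ V] [FiniteDimensional ℝ V]
    (g : LinearMap.BilinForm ℝ V) (hg : g.Nondegenerate)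
    (B : LinearMap.BilinForm ℝ V) : ℝ :=
  LinearMap.trace ℝ V ((g.toDual hg).symm.toLinearMap ∘ₗ B)

lemma trace_smulRight' {V : Type*} [AddCommGroup V] [Module ℝ V] [FiniteDimensional ℝ V]
    (f : Module.Dual ℝ V) (v : V) :
    LinearMap.trace ℝ V (f.smulRight v) = f v := by
  have h : f.smulRight v = dualTensorHom ℝ V V (f ⊗ₜ v) := by
    ext x; simp
  rw [h, LinearMap.trace_eq_contract_apply]
  simp

lemma trG_g {V : Type*} [AddCommGroup V] [Module ℝ V] [FiniteDimensional ℝ V]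
    (g : LinearMap.BilinForm ℝ V) (hg : g.Nondegenerate) :
    trG g hg g = (Module.finrank ℝ V : ℝ) := by
  have h : (g.toDual hg).symm.toLinearMap ∘ₗ g = LinearMap.id := by
    ext x
    exact (g.toDual hg).symm_apply_apply x
  rw [trG, h, LinearMap.trace_id]

lemma trG_add {V : Type*} [AddCommGroup V] [Module ℝ V] [FiniteDimensional ℝ V]
    (g : LinearMap.BilinForm ℝ V) (hg : g.Nondegenerate)
    (B C : LinearMap.BilinForm ℝ V) :
    trG g hg (B + C) = trG g hg B + trG g hg C := by
  simp [trG, LinearMap.comp_add]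

lemma trG_sub {V : Type*} [AddCommGroup V] [Module ℝ V] [FiniteDimensional ℝ V]
    (g : LinearMap.BilinForm ℝ V) (hg : g.Nondegenerate)
    (B C : LinearMap.BilinForm ℝ V) :
    trG g hg (B - C) = trG g hg B - trG g hg C := by
  simp [trG, LinearMap.comp_sub]

lemma trG_smul {V : Type*} [AddCommGroup V] [Module ℝ V] [FiniteDimensional ℝ V]
    (g : LinearMap.BilinForm ℝ V) (hg : g.Nondegenerate)
    (c : ℝ) (B : LinearMap.BilinForm ℝ V) :
    trG g hg (c • B) = c * trG g hg B := by
  simp [trG, LinearMap.comp_smul]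

theorem stmt_13 {V : Type*} [AddCommGroup V] [Module ℝ V] [FiniteDimensional ℝ V]
    (n : ℕ) (hn : 3 ≤ n) (hdim : Module.finrank ℝ V = n)
    (g : LinearMap.BilinForm ℝ V) (hg : g.Nondegenerate) (hgs : g.IsSymm)
    (P : V) (hP : g P P = -1) (π : V →ₗ[ℝ] ℝ) (hπ : π = g.flip P)
    (ω : ℝ) (hω : ω = 1)
    (ππ : LinearMap.BilinForm ℝ V) (hππ : ππ = π.smulRight π)
    (Ric : LinearMap.BilinForm ℝ V) (hRicSymm : Ric.IsSymm)
    (hRicP : ∀ X : V, Ric P X = ((n : ℝ) - 1) * π X)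
    (Ric4 : LinearMap.BilinForm ℝ V)
    (hRic4 : Ric4 = Ric - (((n : ℝ) - 1) * ω) • g - ((n : ℝ) - 1) • ππ) :
    (Ric4 = (trG g hg Ric4 / (n : ℝ)) • g ↔
      Ric = ((n : ℝ) - 1) • ((2 : ℝ) • g + ππ)) ∧
    (Ric4 = (trG g hg Ric4 / (n : ℝ)) • g →
      trG g hg Ric = ((n : ℝ) - 1) * (2 * (n : ℝ) - 1)) := by
  have hn0 : (n : ℝ) ≠ 0 := by positivity
  have hπP : π P = -1 := by rw [hπ]; simpa using hP
  -- trG of ππ is -1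
  have hgP : g.toDual hg P = π := by
    apply LinearMap.ext
    intro Y
    rw [LinearMap.BilinForm.toDual_def, hπ]
    exact hgs.eq P Y
  have hππtr : trG g hg ππ = -1 := by
    have hcomp : (g.toDual hg).symm.toLinearMap ∘ₗ ππ = π.smulRight P := by
      apply LinearMap.ext
      intro X
      have : ππ X = π X • π := by rw [hππ]; rfl
      rw [LinearMap.comp_apply, this]
      simp only [LinearEquiv.coe_coe, map_smul]
      rw [← hgP, LinearEquiv.symm_apply_apply]
      rfl
    rw [trG, hcomp, trace_smulRight', hπP]
  have hgtr : trG g hg g = (n : ℝ) := by rw [trG_g, hdim]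
  -- forward implication: Einstein condition gives the Ric formula and value of c
  have key : Ric4 = (trG g hg Ric4 / (n : ℝ)) • g → Ric4 = ((n : ℝ) - 1) • g := by
    intro h
    have hPP : Ric4 P P = -((n : ℝ) - 1) := by
      rw [hRic4]
      simp only [LinearMap.sub_apply, LinearMap.smul_apply, smul_eq_mul]
      rw [hRicP P, hπP, hP, hω]
      have : ππ P P = 1 := by rw [hππ]; simp [hπP]
      rw [this]; ring
    have hPP' : Ric4 P P = -(trG g hg Ric4 / (n : ℝ)) := by
      conv_lhs => rw [h]
      simp [hP]
    have hc : trG g hg Ric4 / (n : ℝ) = (n : ℝ) - 1 := by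
      have := hPP.symm.trans hPP'
      linarith
    rw [hc] at h
    exact h
  have hRicOf : Ric4 = ((n : ℝ) - 1) • g → Ric = ((n : ℝ) - 1) • ((2 : ℝ) • g + ππ) := by
    intro h
    have : Ric = Ric4 + (((n : ℝ) - 1) * ω) • g + ((n : ℝ) - 1) • ππ := by
      rw [hRic4]; abel
    rw [this, h, hω]
    module
  refine ⟨⟨fun h => hRicOf (key h), fun h => ?_⟩, fun h => ?_⟩
  · -- reverse direction
    have h4 : Ric4 = ((n : ℝ) - 1) • g := by
      rw [hRic4, h, hω]; module
    have htr : trG g hg Ric4 = ((n : ℝ) - 1) * (n : ℝ) := by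
      rw [h4, trG_smul, hgtr]
    rw [htr]
    have hq : ((n : ℝ) - 1) * (n : ℝ) / (n : ℝ) = (n : ℝ) - 1 := by field_simp
    rw [hq]
    exact h4
  · -- scalar curvature value
    have h4 := key h
    have : Ric = Ric4 + (((n : ℝ) - 1) * ω) • g + ((n : ℝ) - 1) • ππ := by
      rw [hRic4]; abel
    rw [this, trG_add, trG_add, trG_smul, trG_smul, h4, trG_smul, hgtr, hππtr, hω]
    ring
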